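/- Fix p > 0, θ ∈ [0,1], and λ₁, λ₂, λ₃ > 0 with mean 𝒫 = (λ₁+λ₂+λ₃)/3. Define φ(ν) = Σ_{i=1}^3 log( θ p + (1-θ)( ν λ_i + (1-ν) 𝒫 ) ) on the set of ν where all arguments are positive. Then φ is concave, φ'(0) = 0 (so φ attains its maximum at ν = 0), and φ(-1/2) ≥ φ(1); consequently φ(ν) ≥ φ(1) for all ν ∈ [-1/2, 1]. -/

import Mathlib

open Real Set

private lemma log_concave_comb {u v a b : ℝ} (hu : 0 < u) (hv : 0 < v)
    (ha : 0 ≤ a) (hb : 0 ≤ b) (hab : a + b = 1) :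
    a * Real.log u + b * Real.log v ≤ Real.log (a * u + b * v) := by
  have := (strictConcaveOn_log_Ioi.concaveOn).2 (Set.mem_Ioi.2 hu) (Set.mem_Ioi.2 hv) ha hb hab
  simpa [smul_eq_mul] using this

private lemma comb_pos {ν l m : ℝ} (h1 : -(1/2) ≤ ν) (h2 : ν ≤ 1) (hl : 0 < l) (hm : 0 < m) :
    0 < ν * l + (1 - ν) * ((l + m) / 3) := by
  rcases lt_or_ge ν 1 with h | h
  · nlinarith
  · have hν : ν = 1 := le_antisymm h2 h
    subst hν; nlinarith

private lemma comb_ge {X Y Z a b : ℝ} (ha : 0 ≤ a) (hab : a + b = 1)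
    (hc : a * X + b * Y ≤ Z) (hXY : X ≥ Y) : Z ≥ Y := by
  have hY : a * Y + b * Y = Y := by rw [← add_mul, hab, one_mul]
  linarith [mul_nonneg ha (sub_nonneg.2 hXY), hY, mul_sub a X Y]

private lemma mix_pos {θ p x : ℝ} (hp : 0 < p) (hx : 0 < x) (h0 : 0 ≤ θ) (h1 : θ ≤ 1) :
    0 < θ * p + (1 - θ) * x := by
  rcases le_total p x with h | h
  · nlinarith [mul_nonneg (sub_nonneg.2 h1) (sub_nonneg.2 h)]
  · nlinarith [mul_nonneg h0 (sub_nonneg.2 h)]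

theorem phi_concave_max (p θ : ℝ) (hp : 0 < p) (hθ : θ ∈ Icc (0:ℝ) 1)
    (lam : Fin 3 → ℝ) (hlam : ∀ i, 0 < lam i) (Pbar : ℝ) (hPbar : Pbar = (∑ i, lam i) / 3)
    (φ : ℝ → ℝ)
    (hφ : φ = fun ν => ∑ i, Real.log (θ * p + (1 - θ) * (ν * lam i + (1 - ν) * Pbar))) :
    ConcaveOn ℝ (Icc (-(1/2) : ℝ) 1) φ ∧
    deriv φ 0 = 0 ∧
    φ (-(1/2)) ≥ φ 1 ∧
    ∀ ν ∈ Icc (-(1/2) : ℝ) 1, φ ν ≥ φ 1 := by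
  have hl0 := hlam 0; have hl1 := hlam 1; have hl2 := hlam 2
  have hPsum : Pbar = (lam 0 + lam 1 + lam 2) / 3 := by rw [hPbar, Fin.sum_univ_three]
  -- positivity of inner combination
  have hxpos : ∀ ν ∈ Icc (-(1/2) : ℝ) 1, ∀ i : Fin 3, 0 < ν * lam i + (1 - ν) * Pbar := by
    intro ν hν i
    fin_cases i
    · have e : Pbar = (lam 0 + (lam 1 + lam 2)) / 3 := by rw [hPsum]; ring
      rw [e]; exact comb_pos hν.1 hν.2 hl0 (by linarith)
    · have e : Pbar = (lam 1 + (lam 0 + lam 2)) / 3 := by rw [hPsum]; ring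
      rw [e]; exact comb_pos hν.1 hν.2 hl1 (by linarith)
    · have e : Pbar = (lam 2 + (lam 0 + lam 1)) / 3 := by rw [hPsum]; ring
      rw [e]; exact comb_pos hν.1 hν.2 hl2 (by linarith)
  have hpos : ∀ ν ∈ Icc (-(1/2) : ℝ) 1, ∀ i : Fin 3,
      0 < θ * p + (1 - θ) * (ν * lam i + (1 - ν) * Pbar) := by
    intro ν hν i
    exact mix_pos hp (hxpos ν hν i) hθ.1 hθ.2
  subst hφ
  -- concavity
  have hconc : ConcaveOn ℝ (Icc (-(1/2) : ℝ) 1)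
      (fun ν => ∑ i, Real.log (θ * p + (1 - θ) * (ν * lam i + (1 - ν) * Pbar))) := by
    refine ⟨convex_Icc _ _, ?_⟩
    intro x hx y hy a b ha hb hab
    simp only [smul_eq_mul]
    rw [Finset.mul_sum, Finset.mul_sum, ← Finset.sum_add_distrib]
    apply Finset.sum_le_sum
    intro i _
    have h1 := hpos x hx i
    have h2 := hpos y hy i
    have key : θ * p + (1 - θ) * ((a * x + b * y) * lam i + (1 - (a * x + b * y)) * Pbar)
        = a * (θ * p + (1 - θ) * (x * lam i + (1 - x) * Pbar))
          + b * (θ * p + (1 - θ) * (y * lam i + (1 - y) * Pbar)) := by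
      have hb' : b = 1 - a := by linarith
      subst hb'; ring
    rw [key]
    exact log_concave_comb h1 h2 ha hb hab
  have h0mem : (0:ℝ) ∈ Icc (-(1/2):ℝ) 1 := by constructor <;> norm_num
  have hmemL : (-(1/2):ℝ) ∈ Icc (-(1/2):ℝ) 1 := by constructor <;> norm_num
  have hmemR : (1:ℝ) ∈ Icc (-(1/2):ℝ) 1 := by constructor <;> norm_num
  -- derivative
  have hA : 0 < θ * p + (1 - θ) * Pbar := by
    have := hpos 0 h0mem 0
    simpa using mix_pos hp (show 0 < Pbar by rw [hPsum]; linarith) hθ.1 hθ.2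
  have hderiv : deriv (fun ν => ∑ i, Real.log (θ * p + (1 - θ) * (ν * lam i + (1 - ν) * Pbar))) 0 = 0 := by
    have hd : ∀ i : Fin 3, HasDerivAt
        (fun ν : ℝ => Real.log (θ * p + (1 - θ) * (ν * lam i + (1 - ν) * Pbar)))
        ((1 - θ) * (lam i - Pbar) / (θ * p + (1 - θ) * Pbar)) 0 := by
      intro i
      have h1 : HasDerivAt (fun ν : ℝ => ν * lam i + (1 - ν) * Pbar) (lam i - Pbar) 0 := by
        have := ((hasDerivAt_id (0:ℝ)).mul_const (lam i)).fun_add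
          (((hasDerivAt_const (0:ℝ) (1:ℝ)).sub (hasDerivAt_id 0)).mul_const Pbar)
        simpa [sub_eq_add_neg] using this
      have hg : HasDerivAt (fun ν : ℝ => θ * p + (1 - θ) * (ν * lam i + (1 - ν) * Pbar))
          ((1 - θ) * (lam i - Pbar)) 0 := by
        simpa using (h1.const_mul (1 - θ)).const_add (θ * p)
      have := hg.log (by simpa using hA.ne')
      simpa using this
    have hsum : HasDerivAt (fun ν => ∑ i, Real.log (θ * p + (1 - θ) * (ν * lam i + (1 - ν) * Pbar)))
        (∑ i : Fin 3, (1 - θ) * (lam i - Pbar) / (θ * p + (1 - θ) * Pbar)) 0 :=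
      HasDerivAt.fun_sum (fun i _ => hd i)
    rw [hsum.deriv, Fin.sum_univ_three, ← add_div, ← add_div]
    have hnum : (1 - θ) * (lam 0 - Pbar) + (1 - θ) * (lam 1 - Pbar) + (1 - θ) * (lam 2 - Pbar) = 0 := by
      rw [hPsum]; ring
    rw [hnum, zero_div]
  -- endpoint inequality
  have hend : (fun ν => ∑ i, Real.log (θ * p + (1 - θ) * (ν * lam i + (1 - ν) * Pbar))) (-(1/2))
      ≥ (fun ν => ∑ i, Real.log (θ * p + (1 - θ) * (ν * lam i + (1 - ν) * Pbar))) 1 := by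
    simp only [Fin.sum_univ_three]
    set s0 := θ * p + (1 - θ) * lam 0 with hs0
    set s1 := θ * p + (1 - θ) * lam 1 with hs1
    set s2 := θ * p + (1 - θ) * lam 2 with hs2
    have hs0p : 0 < s0 := mix_pos hp hl0 hθ.1 hθ.2
    have hs1p : 0 < s1 := mix_pos hp hl1 hθ.1 hθ.2
    have hs2p : 0 < s2 := mix_pos hp hl2 hθ.1 hθ.2
    have e0 : θ * p + (1 - θ) * ((-(1/2)) * lam 0 + (1 - (-(1/2))) * Pbar) = (1/2) * s1 + (1/2) * s2 := by
      rw [hs1, hs2, hPsum]; ring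
    have e1 : θ * p + (1 - θ) * ((-(1/2)) * lam 1 + (1 - (-(1/2))) * Pbar) = (1/2) * s0 + (1/2) * s2 := by
      rw [hs0, hs2, hPsum]; ring
    have e2 : θ * p + (1 - θ) * ((-(1/2)) * lam 2 + (1 - (-(1/2))) * Pbar) = (1/2) * s0 + (1/2) * s1 := by
      rw [hs0, hs1, hPsum]; ring
    have f0 : θ * p + (1 - θ) * (1 * lam 0 + (1 - 1) * Pbar) = s0 := by rw [hs0]; ring
    have f1 : θ * p + (1 - θ) * (1 * lam 1 + (1 - 1) * Pbar) = s1 := by rw [hs1]; ring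
    have f2 : θ * p + (1 - θ) * (1 * lam 2 + (1 - 1) * Pbar) = s2 := by rw [hs2]; ring
    rw [e0, e1, e2, f0, f1, f2]
    have g0 := log_concave_comb hs1p hs2p (by norm_num) (by norm_num) (by norm_num : (1:ℝ)/2 + 1/2 = 1)
    have g1 := log_concave_comb hs0p hs2p (by norm_num) (by norm_num) (by norm_num : (1:ℝ)/2 + 1/2 = 1)
    have g2 := log_concave_comb hs0p hs1p (by norm_num) (by norm_num) (by norm_num : (1:ℝ)/2 + 1/2 = 1)
    linarith
  refine ⟨hconc, hderiv, hend, ?_⟩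
  intro ν hν
  set a := (1 - ν) * (2/3) with ha_def
  set b := (2 * ν + 1) / 3 with hb_def
  have ha : 0 ≤ a := by rw [ha_def]; nlinarith [hν.2]
  have hb : 0 ≤ b := by rw [hb_def]; nlinarith [hν.1]
  have hab : a + b = 1 := by rw [ha_def, hb_def]; ring
  have hpt : a * (-(1/2)) + b * 1 = ν := by rw [ha_def, hb_def]; ring
  clear_value a b
  have hc := hconc.2 hmemL hmemR ha hb hab
  simp only [smul_eq_mul] at hc
  rw [hpt] at hc
  have hend' : (∑ i : Fin 3, Real.log (θ * p + (1 - θ) * (-(1/2) * lam i + (1 - -(1/2)) * Pbar)))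
      ≥ ∑ i : Fin 3, Real.log (θ * p + (1 - θ) * (1 * lam i + (1 - 1) * Pbar)) := by
    simpa using hend
  show (∑ i : Fin 3, Real.log (θ * p + (1 - θ) * (ν * lam i + (1 - ν) * Pbar)))
      ≥ ∑ i : Fin 3, Real.log (θ * p + (1 - θ) * (1 * lam i + (1 - 1) * Pbar))
  exact comb_ge ha hab hc hend'
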